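/- Let T, the constants, and a gadget system satisfying (G1)–(G9) be as in the context, and let C₁ ⊆ A₁ satisfy |N^ν_okay(s) ∩ W(C₁ ∖ {α})| ≥ φ₁kt for every α ∈ C₁, s ∈ S(α) and ν ∈ {+,−}. Then there is a subset C₂ ⊆ C₁ of size at least |C₁|/(6^4 ρ^4) such that for every α ∈ C₂, every s ∈ S(α) and every ν ∈ {+,−}, the set N^ν_okay(s) ∩ W(C₂ ∖ {α}) contains at least φ₂kt vertices u satisfying |N^μ_good(u) ∩ W(C₂ ∖ {α})| ≥ φ₂kt for both μ ∈ {+,−}. -/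

import Mathlib

open Finset

namespace TournamentPartition

/-! ### Basic constants from the paper -/

def rho : ℕ := 10 ^ 4
def sigma1 : ℕ := 10 ^ 60
def sigma2 : ℕ := 10 ^ 4
def sigma3 : ℕ := 10

/-- `s` contains at least `m` elements satisfying `P`. -/
def ManyIn {α : Type*} (s : Finset α) (m : ℝ) (P : α → Prop) : Prop :=
  ∃ s' : Finset α, s' ⊆ s ∧ m ≤ (s'.card : ℝ) ∧ ∀ x ∈ s', P x

section Defs

variable {V I : Type*}

/-- `E u v` means that the edge between `u` and `v` is directed from `u` to `v`. -/
def IsTournament (E : V → V → Prop) : Prop :=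
  (∀ v, ¬ E v v) ∧ ∀ u v : V, u ≠ v → (E u v ↔ ¬ E v u)

/-- There is a directed path from `u` to `v` all of whose vertices lie in `S`. -/
def ReachWithin (E : V → V → Prop) (S : Set V) (u v : V) : Prop :=
  Relation.ReflTransGen (fun a b => a ∈ S ∧ b ∈ S ∧ E a b) u v

def StronglyConnectedOn (E : V → V → Prop) (S : Set V) : Prop :=
  ∀ u ∈ S, ∀ v ∈ S, ReachWithin E S u v

/-- A directed path, as a list of distinct vertices with consecutive edges. -/
def IsDiPath (E : V → V → Prop) (l : List V) : Prop :=
  l ≠ [] ∧ l.Nodup ∧ l.Chain' E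

variable [Fintype V] [DecidableEq V]

/-- The set `S` induces a strongly `k`-connected subtournament. -/
def StronglyKConnectedOn (E : V → V → Prop) (k : ℕ) (S : Finset V) : Prop :=
  k + 1 ≤ S.card ∧
    ∀ Z : Finset V, Z.card ≤ k → StronglyConnectedOn E ((S \ Z : Finset V) : Set V)

def StronglyKConnected (E : V → V → Prop) (k : ℕ) : Prop :=
  StronglyKConnectedOn E k Finset.univ

def outN (E : V → V → Prop) [DecidableRel E] (u : V) : Finset V :=
  Finset.univ.filter fun v => E u v

def inN (E : V → V → Prop) [DecidableRel E] (u : V) : Finset V :=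
  Finset.univ.filter fun v => E v u

/-- A system of gadgets `U(α)` with special sets `S⁺(α), S⁻(α) ⊆ S(α) ⊆ U(α)`,
exceptional sets `X(α)` and special vertices `s⁺(α), s⁻(α) ∈ S(α)`. -/
structure GadgetSystem (V I : Type*) where
  U : I → Finset V
  S : I → Finset V
  Sp : I → Finset V
  Sm : I → Finset V
  X : I → Finset V
  sp : I → V
  sm : I → V
  sp_mem : ∀ α, sp α ∈ S α
  sm_mem : ∀ α, sm α ∈ S α
  Sp_subset : ∀ α, Sp α ⊆ S α
  Sm_subset : ∀ α, Sm α ⊆ S α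
  S_subset : ∀ α, S α ⊆ U α

variable [Fintype I] [DecidableEq I]

def Vokay (G : GadgetSystem V I) : Finset V :=
  Finset.univ \ Finset.univ.biUnion G.S

/-- Vertices of `V_okay` having no out-neighbour in `S⁻(α)` for at least `k*t` indices `α`. -/
def VbadP (E : V → V → Prop) [DecidableRel E] (G : GadgetSystem V I) (k t : ℕ) : Finset V :=
  (Vokay G).filter fun u =>
    k * t ≤ (Finset.univ.filter fun α : I => ∀ v ∈ G.Sm α, ¬ E u v).card

/-- Vertices of `V_okay` having no in-neighbour in `S⁺(α)` for at least `k*t` indices `α`. -/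
def VbadM (E : V → V → Prop) [DecidableRel E] (G : GadgetSystem V I) (k t : ℕ) : Finset V :=
  (Vokay G).filter fun u =>
    k * t ≤ (Finset.univ.filter fun α : I => ∀ v ∈ G.Sp α, ¬ E v u).card

def Vbad (E : V → V → Prop) [DecidableRel E] (G : GadgetSystem V I) (k t : ℕ) : Finset V :=
  VbadP E G k t ∩ VbadM E G k t

def VgoodP (E : V → V → Prop) [DecidableRel E] (G : GadgetSystem V I) (k t : ℕ) : Finset V :=
  Vokay G \ VbadP E G k t

def VgoodM (E : V → V → Prop) [DecidableRel E] (G : GadgetSystem V I) (k t : ℕ) : Finset V :=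
  Vokay G \ VbadM E G k t

def Vgood (E : V → V → Prop) [DecidableRel E] (G : GadgetSystem V I) (k t : ℕ) : Finset V :=
  VgoodP E G k t ∩ VgoodM E G k t

/-- `W(C) = V ∖ ⋃_{α ∈ C} U(α)`. -/
def Wof (G : GadgetSystem V I) (C : Finset I) : Finset V :=
  Finset.univ \ C.biUnion G.U

def NokayP (E : V → V → Prop) [DecidableRel E] (G : GadgetSystem V I) (u : V) : Finset V :=
  outN E u ∩ Vokay G

def NokayM (E : V → V → Prop) [DecidableRel E] (G : GadgetSystem V I) (u : V) : Finset V :=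
  inN E u ∩ Vokay G

def NgoodP (E : V → V → Prop) [DecidableRel E] (G : GadgetSystem V I) (k t : ℕ) (u : V) :
    Finset V :=
  outN E u ∩ VgoodP E G k t

def NgoodM (E : V → V → Prop) [DecidableRel E] (G : GadgetSystem V I) (k t : ℕ) (u : V) :
    Finset V :=
  inN E u ∩ Vgood E G k t

/-! ### Properties (G1)–(G9) -/

def CondG1 (G : GadgetSystem V I) : Prop :=
  ∀ α β : I, α ≠ β → Disjoint (G.U α) (G.U β)

def CondG2 (G : GadgetSystem V I) (k t : ℕ) : Prop :=
  ∀ α : I, (G.S α).card ≤ rho ∧ (G.X α).card ≤ rho * sigma1 * k * t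

def CondG3 (E : V → V → Prop) (G : GadgetSystem V I) : Prop :=
  ∀ α : I, ∀ u ∈ G.Sm α, ∀ v ∈ G.Sp α, ReachWithin E (G.U α : Set V) u v

def CondG4 (E : V → V → Prop) (G : GadgetSystem V I) : Prop :=
  ∀ α : I, ∀ x : V, x ∉ G.X α →
    (E x (G.sp α) → ∀ u ∈ G.U α \ G.S α, E x u) ∧
    (E (G.sm α) x → ∀ u ∈ G.U α \ G.S α, E u x)

def CondG5 (E : V → V → Prop) [DecidableRel E] (G : GadgetSystem V I) (k t : ℕ) : Prop :=
  ∀ u ∈ Vokay G,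
    10 ^ 12 * (VbadP E G k t).card ≤ (outN E u).card ∧
    10 ^ 12 * (VbadM E G k t).card ≤ (inN E u).card

/-- Properties (G1)–(G5) of a gadget system. -/
def GadgetHyp (E : V → V → Prop) [DecidableRel E] (G : GadgetSystem V I) (k t : ℕ) : Prop :=
  CondG1 G ∧ CondG2 G k t ∧ CondG3 E G ∧ CondG4 E G ∧ CondG5 E G k t

def CondG6 (E : V → V → Prop) [DecidableRel E] (G : GadgetSystem V I) (k t : ℕ) : Prop :=
  (Fintype.card V : ℝ) / 2 ≤ ((Vgood E G k t).card : ℝ)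

def CondG7 (E : V → V → Prop) [DecidableRel E] (G : GadgetSystem V I) (k t τ₁ : ℕ) : Prop :=
  ∀ u ∈ Vokay G,
    max ((10 : ℝ) ^ 11 * ((VbadP E G k t).card : ℝ)) (((τ₁ * k * t : ℕ) : ℝ) / 2)
      ≤ ((outN E u ∩ VgoodP E G k t).card : ℝ)

def CondG8 (E : V → V → Prop) [DecidableRel E] (G : GadgetSystem V I) (k t τ₁ : ℕ) : Prop :=
  ∀ u ∈ Vokay G,
    max ((10 : ℝ) ^ 11 * ((VbadM E G k t).card : ℝ)) (((τ₁ * k * t : ℕ) : ℝ) / 2)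
      ≤ ((inN E u ∩ Vgood E G k t).card : ℝ)

def CondG9 (E : V → V → Prop) [DecidableRel E] (G : GadgetSystem V I) (k t τ₁ : ℕ) : Prop :=
  ∀ u : V,
    max ((10 : ℝ) ^ 11 * (((Finset.univ \ Vokay G).card : ℕ) : ℝ)) (((τ₁ * k * t : ℕ) : ℝ) / 2)
      ≤ ((outN E u ∩ Vokay G).card : ℝ) ∧
    max ((10 : ℝ) ^ 11 * (((Finset.univ \ Vokay G).card : ℕ) : ℝ)) (((τ₁ * k * t : ℕ) : ℝ) / 2)
      ≤ ((inN E u ∩ Vokay G).card : ℝ)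

/-- Properties (G6)–(G9) of a gadget system. -/
def GadgetHyp2 (E : V → V → Prop) [DecidableRel E] (G : GadgetSystem V I) (k t τ₁ : ℕ) :
    Prop :=
  CondG6 E G k t ∧ CondG7 E G k t τ₁ ∧ CondG8 E G k t τ₁ ∧ CondG9 E G k t τ₁

/-! ### Available vertices -/

def AvailA1 (E : V → V → Prop) [DecidableRel E] (G : GadgetSystem V I) (k t : ℕ)
    (W : Finset V) (u : V) : Prop :=
  u ∈ Vgood E G k t ∩ W

def AvailA2 (E : V → V → Prop) [DecidableRel E] (G : GadgetSystem V I) (k t τ₂ : ℕ)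
    (W : Finset V) (u : V) : Prop :=
  u ∈ (VgoodP E G k t \ VgoodM E G k t) ∩ W ∧
    ManyIn (inN E u) ((τ₂ * k * t : ℕ) : ℝ) (AvailA1 E G k t W)

def AvailA3 (E : V → V → Prop) [DecidableRel E] (G : GadgetSystem V I) (k t τ₂ : ℕ)
    (W : Finset V) (u : V) : Prop :=
  u ∈ (VgoodM E G k t \ VgoodP E G k t) ∩ W ∧
    ManyIn (outN E u) ((τ₂ * k * t : ℕ) : ℝ)
      (fun v => AvailA1 E G k t W v ∨ AvailA2 E G k t τ₂ W v)

def AvailA4 (E : V → V → Prop) [DecidableRel E] (G : GadgetSystem V I) (k t τ₂ : ℕ)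
    (W : Finset V) (u : V) : Prop :=
  u ∈ Vbad E G k t ∩ W ∧
    ManyIn (outN E u) ((τ₂ * k * t : ℕ) : ℝ)
      (fun v => AvailA1 E G k t W v ∨ AvailA2 E G k t τ₂ W v) ∧
    ManyIn (inN E u) ((τ₂ * k * t : ℕ) : ℝ) (AvailA1 E G k t W)

/-- `u` is available (for `α`) with respect to a family `𝒜`, where `W = W(𝒜 ∖ {α})`. -/
def Available (E : V → V → Prop) [DecidableRel E] (G : GadgetSystem V I) (k t τ₂ : ℕ)
    (W : Finset V) (u : V) : Prop :=
  AvailA1 E G k t W u ∨ AvailA2 E G k t τ₂ W u ∨ AvailA3 E G k t τ₂ W u ∨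
    AvailA4 E G k t τ₂ W u

/-! ### Eligible and helpful vertices -/

/-- Indices `α ∈ 𝒜` such that `u` has no out-neighbour in `S⁻(α)`. -/
def MissOut (E : V → V → Prop) [DecidableRel E] (G : GadgetSystem V I) (𝒜 : Finset I)
    (u : V) : Finset I :=
  𝒜.filter fun α => ∀ v ∈ G.Sm α, ¬ E u v

/-- Indices `α ∈ 𝒜` such that `u` has no in-neighbour in `S⁺(α)`. -/
def MissIn (E : V → V → Prop) [DecidableRel E] (G : GadgetSystem V I) (𝒜 : Finset I)
    (u : V) : Finset I :=
  𝒜.filter fun α => ∀ v ∈ G.Sp α, ¬ E v u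

def Nice1 (E : V → V → Prop) [DecidableRel E] (G : GadgetSystem V I) (k t : ℕ)
    (𝒜 : Finset I) (W : Finset V) (u : V) : Prop :=
  u ∈ Vgood E G k t ∩ W ∧ (MissOut E G 𝒜 u).card ≤ k ∧ (MissIn E G 𝒜 u).card ≤ k

def Nice2 (E : V → V → Prop) [DecidableRel E] (G : GadgetSystem V I) (k t : ℕ) (m : ℝ)
    (𝒜 : Finset I) (W : Finset V) (u : V) : Prop :=
  u ∈ (VgoodP E G k t \ VgoodM E G k t) ∩ W ∧ (MissOut E G 𝒜 u).card ≤ k ∧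
    ManyIn (inN E u) m (Nice1 E G k t 𝒜 W)

def Nice3 (E : V → V → Prop) [DecidableRel E] (G : GadgetSystem V I) (k t : ℕ) (m : ℝ)
    (𝒜 : Finset I) (W : Finset V) (u : V) : Prop :=
  u ∈ (VgoodM E G k t \ VgoodP E G k t) ∩ W ∧ (MissIn E G 𝒜 u).card ≤ k ∧
    ManyIn (outN E u) m (fun v => Nice1 E G k t 𝒜 W v ∨ Nice2 E G k t m 𝒜 W v)

def Nice4 (E : V → V → Prop) [DecidableRel E] (G : GadgetSystem V I) (k t : ℕ) (m : ℝ)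
    (𝒜 : Finset I) (W : Finset V) (u : V) : Prop :=
  u ∈ Vbad E G k t ∩ W ∧
    ManyIn (inN E u) m (Nice1 E G k t 𝒜 W) ∧
    ManyIn (outN E u) m (fun v => Nice1 E G k t 𝒜 W v ∨ Nice2 E G k t m 𝒜 W v)

def NiceFor (E : V → V → Prop) [DecidableRel E] (G : GadgetSystem V I) (k t : ℕ) (m : ℝ)
    (𝒜 : Finset I) (W : Finset V) (u : V) : Prop :=
  Nice1 E G k t 𝒜 W u ∨ Nice2 E G k t m 𝒜 W u ∨ Nice3 E G k t m 𝒜 W u ∨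
    Nice4 E G k t m 𝒜 W u

/-- `u` is eligible for `𝒜` in `W`. -/
def Eligible (E : V → V → Prop) [DecidableRel E] (G : GadgetSystem V I) (k t τ₃ : ℕ)
    (𝒜 : Finset I) (W : Finset V) (u : V) : Prop :=
  NiceFor E G k t ((τ₃ * k * t : ℕ) : ℝ) 𝒜 W u

/-- `u` is helpful for `𝒜` in `W`. -/
def Helpful (E : V → V → Prop) [DecidableRel E] (G : GadgetSystem V I) (k t : ℕ)
    (𝒜 : Finset I) (W : Finset V) (u : V) : Prop :=
  NiceFor E G k t (k : ℝ) 𝒜 W u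

end Defs

noncomputable def phi0 (τ₁ : ℕ) : ℝ := (τ₁ : ℝ) / 4
noncomputable def phi1 (τ₁ : ℕ) : ℝ := phi0 τ₁ / (2 ^ 6 * (rho : ℝ))
noncomputable def phi2 (τ₁ : ℕ) : ℝ := phi1 τ₁ / (2 ^ 14 * (rho : ℝ) ^ 2)
noncomputable def phi3 (τ₁ : ℕ) : ℝ := phi2 τ₁ / (2 ^ 14 * (rho : ℝ) ^ 2)


/-! ### Auxiliary counting lemmas for statement8 -/

section AuxCounting

variable {ι : Type*} [DecidableEq ι]

lemma aux_count_mem (S : Finset ι) (r : ℕ) (β : ι) (hβ : β ∈ S) :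
    ((S.powersetCard (r + 1)).filter (fun D => β ∈ D)).card = (S.card - 1).choose r := by
  classical
  rw [← Finset.card_erase_of_mem hβ, ← Finset.card_powersetCard r (S.erase β)]
  refine Finset.card_bij' (fun D _ => D.erase β) (fun D _ => insert β D) ?_ ?_ ?_ ?_
  · intro D hD
    obtain ⟨⟨h1, h2⟩, h3⟩ : (D ⊆ S ∧ D.card = r + 1) ∧ β ∈ D := by
      simpa [Finset.mem_powersetCard] using hD
    rw [Finset.mem_powersetCard]
    exact ⟨Finset.erase_subset_erase β h1, by rw [Finset.card_erase_of_mem h3]; omega⟩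

  · intro D hD
    obtain ⟨h1, h2⟩ : D ⊆ S.erase β ∧ D.card = r := by
      simpa [Finset.mem_powersetCard] using hD
    have hβD : β ∉ D := fun h => (Finset.mem_erase.1 (h1 h)).1 rfl
    simp only [Finset.mem_filter, Finset.mem_powersetCard]
    refine ⟨⟨Finset.insert_subset hβ (h1.trans (Finset.erase_subset β S)), ?_⟩,
      Finset.mem_insert_self _ _⟩
    rw [Finset.card_insert_of_notMem hβD, h2]
  · intro D hD
    obtain ⟨-, h3⟩ : (D ⊆ S ∧ D.card = r + 1) ∧ β ∈ D := by
      simpa [Finset.mem_powersetCard] using hD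
    exact Finset.insert_erase h3
  · intro D hD
    obtain ⟨h1, -⟩ : D ⊆ S.erase β ∧ D.card = r := by
      simpa [Finset.mem_powersetCard] using hD
    exact Finset.erase_insert (fun h => (Finset.mem_erase.1 (h1 h)).1 rfl)

lemma aux_sum_powersetCard (S : Finset ι) (r : ℕ) (g : ι → ℕ) :
    ∑ D ∈ S.powersetCard (r + 1), ∑ β ∈ D, g β
      = (S.card - 1).choose r * ∑ β ∈ S, g β := by
  classical
  have h1 : ∀ D ∈ S.powersetCard (r + 1),
      ∑ β ∈ D, g β = ∑ β ∈ S, if β ∈ D then g β else 0 := by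
    intro D hD
    rw [← Finset.sum_filter]
    congr 1
    rw [Finset.mem_powersetCard] at hD
    ext x
    simp only [Finset.mem_filter]
    exact ⟨fun h => ⟨hD.1 h, h⟩, fun h => h.2⟩
  rw [Finset.sum_congr rfl h1, Finset.sum_comm, Finset.mul_sum]
  apply Finset.sum_congr rfl
  intro β hβ
  rw [← Finset.sum_filter, Finset.sum_const, smul_eq_mul, aux_count_mem S r β hβ]

lemma aux_markov {A : Type*} (P : Finset A) (f : A → ℕ) (a : ℕ) (p : A → Prop)
    [DecidablePred p] (hp : ∀ D ∈ P, p D → a ≤ f D) :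
    (P.filter p).card * a ≤ ∑ D ∈ P, f D :=
  calc (P.filter p).card * a = ∑ _D ∈ P.filter p, a := by rw [Finset.sum_const, smul_eq_mul]
  _ ≤ ∑ D ∈ P.filter p, f D := Finset.sum_le_sum fun D hD => by
        have h := Finset.mem_filter.1 hD; exact hp D h.1 h.2
  _ ≤ ∑ D ∈ P, f D := Finset.sum_le_sum_of_subset (Finset.filter_subset _ _)

lemma aux_swap {A B : Type*} (P : Finset A) (Q : Finset B) (p : B → A → Prop)
    [inst : ∀ u D, Decidable (p u D)] :
    ∑ D ∈ P, (Q.filter (fun u => p u D)).card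
      = ∑ u ∈ Q, (P.filter (fun D => p u D)).card := by
  simp only [Finset.card_filter]
  exact Finset.sum_comm

end AuxCounting

section AuxSets

variable {V ι : Type*} [DecidableEq V]

lemma aux_inter_biUnion_le [DecidableEq ι] (N : Finset V) (U : ι → Finset V) (D : Finset ι) :
    (N ∩ D.biUnion U).card ≤ ∑ β ∈ D, (N ∩ U β).card := by
  refine le_trans (Finset.card_le_card ?_) Finset.card_biUnion_le
  intro x hx
  simp only [Finset.mem_inter, Finset.mem_biUnion] at hx ⊢
  obtain ⟨hxN, β, hβ, hxU⟩ := hx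
  exact ⟨β, hβ, hxN, hxU⟩

lemma aux_sum_inter_card_le (N : Finset V) (U : ι → Finset V) (S : Finset ι)
    (hdisj : ∀ a b : ι, a ≠ b → Disjoint (U a) (U b)) :
    ∑ β ∈ S, (N ∩ U β).card ≤ N.card := by
  classical
  rw [← Finset.card_biUnion (fun a _ b _ hab =>
    ((hdisj a b hab).mono Finset.inter_subset_right Finset.inter_subset_right))]
  exact Finset.card_le_card (Finset.biUnion_subset.2 fun β _ => Finset.inter_subset_left)

end AuxSets

section AuxGadget

variable {V I : Type*} [Fintype V] [DecidableEq V] [Fintype I] [DecidableEq I]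

lemma Wof_antitone (G : GadgetSystem V I) {A B : Finset I} (h : A ⊆ B) :
    Wof G B ⊆ Wof G A :=
  Finset.sdiff_subset_sdiff (Finset.Subset.refl _)
    (Finset.biUnion_subset_biUnion_of_subset_left _ h)

/-- Vertices of `Q` whose good in/out neighbourhoods are at most half eaten by `⋃_{β ∈ D} U β`. -/
def Surv (E : V → V → Prop) [DecidableRel E] (G : GadgetSystem V I) (k t : ℕ)
    (Q : Finset V) (D : Finset I) : Finset V :=
  Q.filter fun u =>
    2 * ((NgoodP E G k t u ∩ D.biUnion G.U).card) ≤ (NgoodP E G k t u).card ∧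
    2 * ((NgoodM E G k t u ∩ D.biUnion G.U).card) ≤ (NgoodM E G k t u).card

def GoodFor (E : V → V → Prop) [DecidableRel E] (G : GadgetSystem V I) (k t τ₁ : ℕ)
    (Q : Finset V) (D : Finset I) : Prop :=
  phi2 τ₁ * k * t ≤ ((Surv E G k t Q D).card : ℝ)

def HappyA (E : V → V → Prop) [DecidableRel E] (G : GadgetSystem V I) (k t τ₁ : ℕ)
    (C₁ : Finset I) (α : I) (D : Finset I) : Prop :=
  ∀ s ∈ G.S α,
    GoodFor E G k t τ₁ (NokayP E G s ∩ Wof G (C₁.erase α)) D ∧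
    GoodFor E G k t τ₁ (NokayM E G s ∩ Wof G (C₁.erase α)) D

end AuxGadget

section AuxPhi

lemma phi1_nonneg (τ₁ : ℕ) : 0 ≤ phi1 τ₁ := by
  unfold phi1 phi0 rho; positivity

lemma phi2_le_phi1_half (τ₁ : ℕ) : phi2 τ₁ ≤ phi1 τ₁ / 2 := by
  have h := phi1_nonneg τ₁
  unfold phi2 rho
  rw [div_le_div_iff₀ (by norm_num) (by norm_num)]
  push_cast
  nlinarith

lemma phi2_kt_le (τ₁ k t : ℕ) : phi2 τ₁ * k * t ≤ ((τ₁ * k * t : ℕ) : ℝ) / 4 := by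
  have hk : (0:ℝ) ≤ (k : ℝ) := Nat.cast_nonneg k
  have ht : (0:ℝ) ≤ (t : ℝ) := Nat.cast_nonneg t
  have hτ : (0:ℝ) ≤ (τ₁ : ℝ) := Nat.cast_nonneg τ₁
  have h : phi2 τ₁ ≤ (τ₁ : ℝ) / 4 := by
    unfold phi2 phi1 phi0 rho
    rw [div_le_div_iff₀ (by norm_num) (by norm_num)]
    push_cast
    nlinarith
  push_cast
  calc phi2 τ₁ * k * t ≤ ((τ₁:ℝ)/4) * k * t := by
        apply mul_le_mul_of_nonneg_right _ ht
        exact mul_le_mul_of_nonneg_right h hk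
  _ = (τ₁:ℝ) * k * t / 4 := by ring

lemma phi1_kt_pos (τ₁ k t : ℕ) (h1 : 1 ≤ τ₁) (h2 : 1 ≤ k) (h3 : 1 ≤ t) :
    0 < phi1 τ₁ * k * t := by
  have : (0:ℝ) < phi1 τ₁ := by
    unfold phi1 phi0 rho
    have : (0:ℝ) < (τ₁ : ℝ) := by exact_mod_cast h1
    positivity
  have hk : (0:ℝ) < (k:ℝ) := by exact_mod_cast h2
  have ht : (0:ℝ) < (t:ℝ) := by exact_mod_cast h3
  positivity

end AuxPhi

section AuxSurv

variable {V I : Type*} [Fintype V] [DecidableEq V] [Fintype I] [DecidableEq I]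
variable (E : V → V → Prop) [DecidableRel E] (G : GadgetSystem V I)

lemma surv_mem_bound (k t τ₁ : ℕ)
    (h7 : CondG7 E G k t τ₁) (h8 : CondG8 E G k t τ₁)
    {Q : Finset V} (hQok : Q ⊆ Vokay G) {D D' : Finset I} (hD' : D' ⊆ D)
    {u : V} (hu : u ∈ Surv E G k t Q D) :
    phi2 τ₁ * k * t ≤ ((NgoodP E G k t u ∩ Wof G D').card : ℝ) ∧
    phi2 τ₁ * k * t ≤ ((NgoodM E G k t u ∩ Wof G D').card : ℝ) := by
  obtain ⟨huQ, hcP, hcM⟩ := Finset.mem_filter.1 hu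
  have huok : u ∈ Vokay G := hQok huQ
  have key : ∀ N : Finset V, ((τ₁ * k * t : ℕ) : ℝ) / 2 ≤ (N.card : ℝ) →
      2 * ((N ∩ D.biUnion G.U).card) ≤ N.card →
      phi2 τ₁ * k * t ≤ ((N ∩ Wof G D').card : ℝ) := by
    intro N hN h2
    have hsub : N ∩ D'.biUnion G.U ⊆ N ∩ D.biUnion G.U :=
      Finset.inter_subset_inter (Finset.Subset.refl _)
        (Finset.biUnion_subset_biUnion_of_subset_left _ hD')
    have h2' : 2 * ((N ∩ D'.biUnion G.U).card) ≤ N.card :=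
      le_trans (Nat.mul_le_mul_left 2 (Finset.card_le_card hsub)) h2
    have heq : N ∩ Wof G D' = N \ D'.biUnion G.U := by
      ext x
      simp only [Finset.mem_inter, Finset.mem_sdiff, Wof, Finset.mem_univ, true_and]
    have hcard : (N \ D'.biUnion G.U).card + (N ∩ D'.biUnion G.U).card = N.card :=
      Finset.card_sdiff_add_card_inter N _
    have hge : N.card ≤ 2 * (N \ D'.biUnion G.U).card := by omega
    rw [heq]
    have : ((N.card : ℝ)) ≤ 2 * ((N \ D'.biUnion G.U).card : ℝ) := by exact_mod_cast hge
    have h4 : ((τ₁ * k * t : ℕ) : ℝ) / 4 ≤ ((N \ D'.biUnion G.U).card : ℝ) := by linarith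
    exact le_trans (phi2_kt_le τ₁ k t) h4
  constructor
  · exact key _ (le_trans (le_max_right _ _) (h7 u huok)) hcP
  · exact key _ (le_trans (le_max_right _ _) (h8 u huok)) hcM

end AuxSurv


/-- Lemma 4.7. -/
theorem statement8 :
    ∃ C : ℕ, ∀ (τ₁ k t : ℕ), C ≤ τ₁ → C * τ₁ ≤ k → 2 ≤ t →
      ∀ (V : Type) [Fintype V] [DecidableEq V] (E : V → V → Prop) [DecidableRel E],
        IsTournament E → StronglyKConnected E (τ₁ * k * t) →
        ∀ G : GadgetSystem V (Fin (sigma1 * k * t)),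
          GadgetHyp E G k t → GadgetHyp2 E G k t τ₁ →
          ∀ C₁ : Finset (Fin (sigma1 * k * t)),
            (∀ α ∈ C₁, ∀ s ∈ G.S α,
              phi1 τ₁ * k * t ≤ ((NokayP E G s ∩ Wof G (C₁.erase α)).card : ℝ) ∧
              phi1 τ₁ * k * t ≤ ((NokayM E G s ∩ Wof G (C₁.erase α)).card : ℝ)) →
            ∃ C₂ : Finset (Fin (sigma1 * k * t)), C₂ ⊆ C₁ ∧
              (C₁.card : ℝ) / (6 ^ 4 * (rho : ℝ) ^ 4) ≤ (C₂.card : ℝ) ∧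
              ∀ α ∈ C₂, ∀ s ∈ G.S α,
                ManyIn (NokayP E G s ∩ Wof G (C₂.erase α)) (phi2 τ₁ * k * t)
                  (fun u =>
                    phi2 τ₁ * k * t ≤
                      ((NgoodP E G k t u ∩ Wof G (C₂.erase α)).card : ℝ) ∧
                    phi2 τ₁ * k * t ≤
                      ((NgoodM E G k t u ∩ Wof G (C₂.erase α)).card : ℝ)) ∧
                ManyIn (NokayM E G s ∩ Wof G (C₂.erase α)) (phi2 τ₁ * k * t)
                  (fun u =>
                    phi2 τ₁ * k * t ≤
                      ((NgoodP E G k t u ∩ Wof G (C₂.erase α)).card : ℝ) ∧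
                    phi2 τ₁ * k * t ≤
                      ((NgoodM E G k t u ∩ Wof G (C₂.erase α)).card : ℝ)) := by
  refine ⟨1, ?_⟩
  intro τ₁ k t hτC hkC ht V _ _ E _ _hT _hconn G hG hG2 C₁ hC₁
  classical
  obtain ⟨hG6, hG7, hG8, hG9⟩ := hG2
  have hG1 : CondG1 G := hG.1
  have hG2c : CondG2 G k t := hG.2.1
  have hτ1 : 1 ≤ τ₁ := hτC
  have hk1 : 1 ≤ k := le_trans (by omega) hkC
  have ht1 : 1 ≤ t := by omega
  have hφ1pos : 0 < phi1 τ₁ * k * t := phi1_kt_pos τ₁ k t hτ1 hk1 ht1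
  have hτkt2 : (2:ℕ) ≤ τ₁ * k * t := by
    have h := Nat.mul_le_mul (Nat.mul_le_mul hτ1 hk1) ht
    omega
  have hφ21 : phi2 τ₁ * k * t ≤ phi1 τ₁ * k * t / 2 := by
    have h := phi2_le_phi1_half τ₁
    have hk0 : (0:ℝ) ≤ (k:ℝ) := Nat.cast_nonneg k
    have ht0 : (0:ℝ) ≤ (t:ℝ) := Nat.cast_nonneg t
    calc phi2 τ₁ * k * t ≤ (phi1 τ₁ / 2) * k * t := by
          apply mul_le_mul_of_nonneg_right _ ht0
          exact mul_le_mul_of_nonneg_right h hk0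
    _ = phi1 τ₁ * k * t / 2 := by ring
  have hφ21' : phi2 τ₁ * k * t ≤ phi1 τ₁ * k * t := le_trans hφ21 (by linarith)
  -- trivial case
  rcases Finset.eq_empty_or_nonempty C₁ with hC1e | hC1ne
  · refine ⟨∅, Finset.empty_subset _, ?_, by simp⟩
    simp [hC1e]
  -- setup
  set cn := C₁.card with hcn_def
  have hcn1 : 1 ≤ cn := Finset.card_pos.2 hC1ne
  set d : ℕ := 648 * rho ^ 4 with hd_def
  have hdval : d = 6480000000000000000 := by norm_num [hd_def, rho]
  set m := cn / d + 1 with hm_def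
  obtain ⟨q, hq⟩ : ∃ q, cn / d = q := ⟨_, rfl⟩
  have hmq : m = q + 1 := by rw [hm_def, hq]
  have hqd' : q * 6480000000000000000 ≤ cn := by
    rw [← hq, ← hdval]
    exact Nat.div_mul_le_self cn d
  have hqlt : q < cn := by
    rw [← hq]
    exact Nat.div_lt_self (by omega) (by rw [hdval]; norm_num)
  have hm1 : 1 ≤ m := by omega
  have hmcn : m ≤ cn := by omega
  -- per-vertex degree bounds
  have hNP1 : ∀ u ∈ Vokay G, 1 ≤ (NgoodP E G k t u).card := by
    intro u hu
    have h : ((τ₁ * k * t : ℕ) : ℝ) / 2 ≤ ((NgoodP E G k t u).card : ℝ) :=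
      le_trans (le_max_right _ _) (hG7 u hu)
    have h2 : (2:ℝ) ≤ ((τ₁ * k * t : ℕ) : ℝ) := by exact_mod_cast hτkt2
    have : (1:ℝ) ≤ ((NgoodP E G k t u).card : ℝ) := by linarith
    exact_mod_cast this
  have hNM1 : ∀ u ∈ Vokay G, 1 ≤ (NgoodM E G k t u).card := by
    intro u hu
    have h : ((τ₁ * k * t : ℕ) : ℝ) / 2 ≤ ((NgoodM E G k t u).card : ℝ) :=
      le_trans (le_max_right _ _) (hG8 u hu)
    have h2 : (2:ℝ) ≤ ((τ₁ * k * t : ℕ) : ℝ) := by exact_mod_cast hτkt2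
    have : (1:ℝ) ≤ ((NgoodM E G k t u).card : ℝ) := by linarith
    exact_mod_cast this
  -- Claim 1 : few subsets starve a fixed neighbourhood
  have claim1 : ∀ (r : ℕ) (S' : Finset (Fin (sigma1 * k * t))) (N : Finset V), 1 ≤ N.card →
      ((S'.powersetCard (r+1)).filter
        (fun D => N.card < 2 * ((N ∩ D.biUnion G.U).card))).card
        ≤ 2 * (S'.card - 1).choose r := by
    intro r S' N hN
    have key : ∀ D ∈ S'.powersetCard (r+1),
        N.card < 2 * ((N ∩ D.biUnion G.U).card) →
        N.card ≤ 2 * ∑ β ∈ D, (N ∩ G.U β).card := by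
      intro D _ h
      have h2 := aux_inter_biUnion_le N G.U D
      omega
    have h1 := aux_markov (S'.powersetCard (r+1))
      (fun D => 2 * ∑ β ∈ D, (N ∩ G.U β).card) N.card
      (fun D => N.card < 2 * ((N ∩ D.biUnion G.U).card)) key
    have h2 : ∑ D ∈ S'.powersetCard (r+1), 2 * ∑ β ∈ D, (N ∩ G.U β).card
        = 2 * ((S'.card - 1).choose r * ∑ β ∈ S', (N ∩ G.U β).card) := by
      rw [← Finset.mul_sum, aux_sum_powersetCard]
    have h3 : ∑ β ∈ S', (N ∩ G.U β).card ≤ N.card :=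
      aux_sum_inter_card_le N G.U S' hG1
    have h4 : ((S'.powersetCard (r+1)).filter
        (fun D => N.card < 2 * ((N ∩ D.biUnion G.U).card))).card * N.card
        ≤ (2 * (S'.card - 1).choose r) * N.card := by
      calc _ ≤ ∑ D ∈ S'.powersetCard (r+1), 2 * ∑ β ∈ D, (N ∩ G.U β).card := h1
      _ = 2 * ((S'.card - 1).choose r * ∑ β ∈ S', (N ∩ G.U β).card) := h2
      _ ≤ 2 * ((S'.card - 1).choose r * N.card) := by
          exact Nat.mul_le_mul_left 2 (Nat.mul_le_mul_left _ h3)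
      _ = (2 * (S'.card - 1).choose r) * N.card := by ring
    exact Nat.le_of_mul_le_mul_right h4 (by omega)
  -- Claim 2 : few subsets make a fixed candidate set fail
  have claim2 : ∀ (r : ℕ) (S' : Finset (Fin (sigma1 * k * t))) (Q : Finset V),
      Q ⊆ Vokay G → phi1 τ₁ * k * t ≤ (Q.card : ℝ) →
      ((S'.powersetCard (r+1)).filter
        (fun D => ¬ GoodFor E G k t τ₁ Q D)).card ≤ 8 * (S'.card - 1).choose r := by
    intro r S' Q hQok hQc
    have hQ1 : 1 ≤ Q.card := by
      by_contra h
      have h0 : Q.card = 0 := by omega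
      rw [h0] at hQc
      simp at hQc
      linarith
    have key : ∀ D ∈ S'.powersetCard (r+1), ¬ GoodFor E G k t τ₁ Q D →
        Q.card ≤ 2 * ((Q.filter (fun u =>
            (NgoodP E G k t u).card < 2 * ((NgoodP E G k t u ∩ D.biUnion G.U).card))).card
          + (Q.filter (fun u =>
            (NgoodM E G k t u).card < 2 * ((NgoodM E G k t u ∩ D.biUnion G.U).card))).card) := by
      intro D _ hfail
      have hsurv_sub : Surv E G k t Q D ⊆ Q := Finset.filter_subset _ _
      have hsurvlt : ((Surv E G k t Q D).card : ℝ) < phi2 τ₁ * k * t := by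
        unfold GoodFor at hfail
        exact lt_of_not_ge hfail
      have hsub2 : Q \ Surv E G k t Q D ⊆
          (Q.filter (fun u =>
            (NgoodP E G k t u).card < 2 * ((NgoodP E G k t u ∩ D.biUnion G.U).card)))
          ∪ (Q.filter (fun u =>
            (NgoodM E G k t u).card < 2 * ((NgoodM E G k t u ∩ D.biUnion G.U).card))) := by
        intro u hu
        obtain ⟨huQ, hns⟩ := Finset.mem_sdiff.1 hu
        rw [Finset.mem_union, Finset.mem_filter, Finset.mem_filter]
        by_contra hcon
        push_neg at hcon
        refine hns (Finset.mem_filter.2 ⟨huQ, ?_, ?_⟩)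
        · have := hcon.1 huQ; omega
        · have := hcon.2 huQ; omega
      have hcards : Q.card - (Surv E G k t Q D).card
          ≤ (Q.filter (fun u =>
            (NgoodP E G k t u).card < 2 * ((NgoodP E G k t u ∩ D.biUnion G.U).card))).card
          + (Q.filter (fun u =>
            (NgoodM E G k t u).card < 2 * ((NgoodM E G k t u ∩ D.biUnion G.U).card))).card := by
        calc Q.card - (Surv E G k t Q D).card = (Q \ Surv E G k t Q D).card :=
              (Finset.card_sdiff_of_subset hsurv_sub).symm
        _ ≤ _ := le_trans (Finset.card_le_card hsub2) (Finset.card_union_le _ _)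
      have hhalf : 2 * (Surv E G k t Q D).card < Q.card := by
        have h1 : ((Surv E G k t Q D).card : ℝ) < (Q.card : ℝ) / 2 := by
          calc ((Surv E G k t Q D).card : ℝ) < phi2 τ₁ * k * t := hsurvlt
          _ ≤ phi1 τ₁ * k * t / 2 := hφ21
          _ ≤ (Q.card : ℝ) / 2 := by linarith
        have h2 : (2 * (Surv E G k t Q D).card : ℝ) < (Q.card : ℝ) := by
          push_cast
          linarith
        exact_mod_cast h2
      omega
    have hmark := aux_markov (S'.powersetCard (r+1))
      (fun D => 2 * ((Q.filter (fun u =>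
          (NgoodP E G k t u).card < 2 * ((NgoodP E G k t u ∩ D.biUnion G.U).card))).card
        + (Q.filter (fun u =>
          (NgoodM E G k t u).card < 2 * ((NgoodM E G k t u ∩ D.biUnion G.U).card))).card))
      Q.card (fun D => ¬ GoodFor E G k t τ₁ Q D) key
    have hsumP : ∑ D ∈ S'.powersetCard (r+1), (Q.filter (fun u =>
        (NgoodP E G k t u).card < 2 * ((NgoodP E G k t u ∩ D.biUnion G.U).card))).card
        ≤ Q.card * (2 * (S'.card - 1).choose r) := by
      rw [aux_swap (S'.powersetCard (r+1)) Q
        (fun u D => (NgoodP E G k t u).card < 2 * ((NgoodP E G k t u ∩ D.biUnion G.U).card))]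
      calc _ ≤ ∑ _u ∈ Q, 2 * (S'.card - 1).choose r :=
            Finset.sum_le_sum (fun u hu => claim1 r S' _ (hNP1 u (hQok hu)))
      _ = Q.card * (2 * (S'.card - 1).choose r) := by
            rw [Finset.sum_const, smul_eq_mul]
    have hsumM : ∑ D ∈ S'.powersetCard (r+1), (Q.filter (fun u =>
        (NgoodM E G k t u).card < 2 * ((NgoodM E G k t u ∩ D.biUnion G.U).card))).card
        ≤ Q.card * (2 * (S'.card - 1).choose r) := by
      rw [aux_swap (S'.powersetCard (r+1)) Q
        (fun u D => (NgoodM E G k t u).card < 2 * ((NgoodM E G k t u ∩ D.biUnion G.U).card))]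
      calc _ ≤ ∑ _u ∈ Q, 2 * (S'.card - 1).choose r :=
            Finset.sum_le_sum (fun u hu => claim1 r S' _ (hNM1 u (hQok hu)))
      _ = Q.card * (2 * (S'.card - 1).choose r) := by
            rw [Finset.sum_const, smul_eq_mul]
    have htot : ((S'.powersetCard (r+1)).filter
        (fun D => ¬ GoodFor E G k t τ₁ Q D)).card * Q.card
        ≤ (8 * (S'.card - 1).choose r) * Q.card := by
      calc _ ≤ ∑ D ∈ S'.powersetCard (r+1), 2 * ((Q.filter (fun u =>
              (NgoodP E G k t u).card < 2 * ((NgoodP E G k t u ∩ D.biUnion G.U).card))).card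
            + (Q.filter (fun u =>
              (NgoodM E G k t u).card < 2 * ((NgoodM E G k t u ∩ D.biUnion G.U).card))).card) :=
            hmark
      _ = 2 * ((∑ D ∈ S'.powersetCard (r+1), (Q.filter (fun u =>
              (NgoodP E G k t u).card < 2 * ((NgoodP E G k t u ∩ D.biUnion G.U).card))).card)
            + ∑ D ∈ S'.powersetCard (r+1), (Q.filter (fun u =>
              (NgoodM E G k t u).card < 2 * ((NgoodM E G k t u ∩ D.biUnion G.U).card))).card) := by
            rw [← Finset.sum_add_distrib, ← Finset.mul_sum]
      _ ≤ 2 * (Q.card * (2 * (S'.card - 1).choose r) + Q.card * (2 * (S'.card - 1).choose r)) := by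
            exact Nat.mul_le_mul_left 2 (Nat.add_le_add hsumP hsumM)
      _ = (8 * (S'.card - 1).choose r) * Q.card := by ring
    exact Nat.le_of_mul_le_mul_right htot (by omega)
  -- Step A : each α is happy with most (m-1)-subsets
  have stepA : ∀ α ∈ C₁,
      2 * (((C₁.erase α).powersetCard (m-1)).filter
        (fun D => ¬ HappyA E G k t τ₁ C₁ α D)).card ≤ (cn - 1).choose (m-1) := by
    intro α hα
    rcases Nat.lt_or_ge m 2 with hm2 | hm2
    · -- m = 1
      have hm0 : m - 1 = 0 := by omega
      rw [hm0, Finset.powersetCard_zero]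
      have hfe : ({∅} : Finset (Finset (Fin (sigma1 * k * t)))).filter
          (fun D => ¬ HappyA E G k t τ₁ C₁ α D) = ∅ := by
        rw [Finset.filter_eq_empty_iff]
        intro D hD
        rw [Finset.mem_singleton] at hD
        subst hD
        rw [not_not]
        intro s hs
        have hq := hC₁ α hα s hs
        have hSurvP : Surv E G k t (NokayP E G s ∩ Wof G (C₁.erase α)) ∅
            = NokayP E G s ∩ Wof G (C₁.erase α) := by
          unfold Surv
          rw [Finset.filter_true_of_mem]
          intro u _
          simp
        have hSurvM : Surv E G k t (NokayM E G s ∩ Wof G (C₁.erase α)) ∅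
            = NokayM E G s ∩ Wof G (C₁.erase α) := by
          unfold Surv
          rw [Finset.filter_true_of_mem]
          intro u _
          simp
        constructor
        · unfold GoodFor
          rw [hSurvP]
          exact le_trans hφ21' hq.1
        · unfold GoodFor
          rw [hSurvM]
          exact le_trans hφ21' hq.2
      rw [hfe]
      simp [Nat.choose_pos (show m - 1 ≤ cn - 1 by omega)]
    · -- 2 ≤ m
      have hq1 : 1 ≤ q := by omega
      have hcnd : 6480000000000000000 ≤ cn := by
        calc 6480000000000000000 = 1 * 6480000000000000000 := by ring
        _ ≤ q * 6480000000000000000 := Nat.mul_le_mul_right _ hq1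
        _ ≤ cn := hqd' 
      have hS'card : (C₁.erase α).card = cn - 1 := Finset.card_erase_of_mem hα
      have hr : m - 1 = (m - 2) + 1 := by omega
      set ch := (cn - 2).choose (m - 2) with hch_def
      have hUsub : ((C₁.erase α).powersetCard (m-1)).filter
          (fun D => ¬ HappyA E G k t τ₁ C₁ α D) ⊆
          (G.S α).biUnion (fun s =>
            (((C₁.erase α).powersetCard (m-1)).filter
              (fun D => ¬ GoodFor E G k t τ₁ (NokayP E G s ∩ Wof G (C₁.erase α)) D))
            ∪ (((C₁.erase α).powersetCard (m-1)).filter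
              (fun D => ¬ GoodFor E G k t τ₁ (NokayM E G s ∩ Wof G (C₁.erase α)) D))) := by
        intro D hD
        obtain ⟨hDP, hnh⟩ := Finset.mem_filter.1 hD
        unfold HappyA at hnh
        push_neg at hnh
        obtain ⟨s, hs, hng⟩ := hnh
        rw [Finset.mem_biUnion]
        refine ⟨s, hs, ?_⟩
        rw [Finset.mem_union, Finset.mem_filter, Finset.mem_filter]
        tauto
      have hcard1 : (((C₁.erase α).powersetCard (m-1)).filter
          (fun D => ¬ HappyA E G k t τ₁ C₁ α D)).card ≤ rho * (16 * ch) := by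
        calc _ ≤ _ := Finset.card_le_card hUsub
        _ ≤ ∑ s ∈ G.S α, ((((C₁.erase α).powersetCard (m-1)).filter
              (fun D => ¬ GoodFor E G k t τ₁ (NokayP E G s ∩ Wof G (C₁.erase α)) D))
            ∪ (((C₁.erase α).powersetCard (m-1)).filter
              (fun D => ¬ GoodFor E G k t τ₁ (NokayM E G s ∩ Wof G (C₁.erase α)) D))).card :=
            Finset.card_biUnion_le
        _ ≤ ∑ _s ∈ G.S α, 16 * ch := by
            apply Finset.sum_le_sum
            intro s hs
            have hQokP : NokayP E G s ∩ Wof G (C₁.erase α) ⊆ Vokay G :=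
              Finset.inter_subset_left.trans Finset.inter_subset_right
            have hQokM : NokayM E G s ∩ Wof G (C₁.erase α) ⊆ Vokay G :=
              Finset.inter_subset_left.trans Finset.inter_subset_right
            have hbP := claim2 (m-2) (C₁.erase α) _ hQokP (hC₁ α hα s hs).1
            have hbM := claim2 (m-2) (C₁.erase α) _ hQokM (hC₁ α hα s hs).2
            rw [← hr, hS'card] at hbP hbM
            have : cn - 1 - 1 = cn - 2 := by omega
            rw [this] at hbP hbM
            calc _ ≤ _ + _ := Finset.card_union_le _ _
            _ ≤ 8 * ch + 8 * ch := Nat.add_le_add hbP hbM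
            _ = 16 * ch := by ring
        _ ≤ rho * (16 * ch) := by
            rw [Finset.sum_const, smul_eq_mul]
            exact Nat.mul_le_mul_right _ (hG2c α).1
    -- numeric comparison
      have hnum : 32 * rho * (m - 1) ≤ cn - 1 := by
        have hrho : rho = 10000 := by norm_num [rho]
        rw [hrho]
        omega
      have hid : (cn - 1) * ch = (cn - 1).choose (m - 1) * (m - 1) := by
        have h := Nat.add_one_mul_choose_eq (cn - 2) (m - 2)
        have e1 : (cn - 2) + 1 = cn - 1 := by omega
        have e2 : (m - 2) + 1 = m - 1 := by omega
        rw [e1, e2] at h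
        exact h
      have h5 : (32 * rho * ch) * (m - 1) ≤ ((cn - 1).choose (m - 1)) * (m - 1) := by
        calc (32 * rho * ch) * (m - 1) = (32 * rho * (m - 1)) * ch := by ring
        _ ≤ (cn - 1) * ch := Nat.mul_le_mul_right ch hnum
        _ = ((cn - 1).choose (m - 1)) * (m - 1) := hid
      have h6 : 32 * rho * ch ≤ (cn - 1).choose (m - 1) :=
        Nat.le_of_mul_le_mul_right h5 (by omega)
      calc 2 * (((C₁.erase α).powersetCard (m-1)).filter
          (fun D => ¬ HappyA E G k t τ₁ C₁ α D)).card
          ≤ 2 * (rho * (16 * ch)) := Nat.mul_le_mul_left 2 hcard1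
      _ = 32 * rho * ch := by ring
      _ ≤ (cn - 1).choose (m - 1) := h6
  -- Step B : double counting over all m-subsets
  have hswap : ∑ C₂ ∈ C₁.powersetCard m,
      (C₁.filter (fun α => α ∈ C₂ ∧ ¬ HappyA E G k t τ₁ C₁ α (C₂.erase α))).card
    = ∑ α ∈ C₁, (((C₁.erase α).powersetCard (m-1)).filter
        (fun D => ¬ HappyA E G k t τ₁ C₁ α D)).card := by
    rw [aux_swap (C₁.powersetCard m) C₁
      (fun α C₂ => α ∈ C₂ ∧ ¬ HappyA E G k t τ₁ C₁ α (C₂.erase α))]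
    apply Finset.sum_congr rfl
    intro α hα
    refine Finset.card_bij' (fun C₂ _ => C₂.erase α) (fun D _ => insert α D) ?_ ?_ ?_ ?_
    · intro C₂ hC₂m
      obtain ⟨⟨hsub, hcard⟩, hin, hnh⟩ : ((C₂ ⊆ C₁ ∧ C₂.card = m) ∧ (α ∈ C₂ ∧
          ¬ HappyA E G k t τ₁ C₁ α (C₂.erase α))) := by
        simpa only [Finset.mem_filter, Finset.mem_powersetCard] using hC₂m
      simp only [Finset.mem_filter, Finset.mem_powersetCard]
      refine ⟨⟨Finset.erase_subset_erase α hsub, ?_⟩, hnh⟩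
      rw [Finset.card_erase_of_mem hin, hcard]
    · intro D hDm
      obtain ⟨⟨hsub, hcard⟩, hnh⟩ : ((D ⊆ C₁.erase α ∧ D.card = m - 1) ∧
          ¬ HappyA E G k t τ₁ C₁ α D) := by
        simpa only [Finset.mem_filter, Finset.mem_powersetCard] using hDm
      have hαD : α ∉ D := fun h => (Finset.mem_erase.1 (hsub h)).1 rfl
      simp only [Finset.mem_filter, Finset.mem_powersetCard]
      refine ⟨⟨Finset.insert_subset hα (hsub.trans (Finset.erase_subset α C₁)), ?_⟩,
        Finset.mem_insert_self _ _, ?_⟩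
      · rw [Finset.card_insert_of_notMem hαD, hcard]
        omega
      · rw [Finset.erase_insert hαD]
        exact hnh
    · intro C₂ hC₂m
      obtain ⟨-, hin, -⟩ : ((C₂ ⊆ C₁ ∧ C₂.card = m) ∧ (α ∈ C₂ ∧
          ¬ HappyA E G k t τ₁ C₁ α (C₂.erase α))) := by
        simpa only [Finset.mem_filter, Finset.mem_powersetCard] using hC₂m
      exact Finset.insert_erase hin
    · intro D hDm
      obtain ⟨⟨hsub, -⟩, -⟩ : ((D ⊆ C₁.erase α ∧ D.card = m - 1) ∧
          ¬ HappyA E G k t τ₁ C₁ α D) := by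
        simpa only [Finset.mem_filter, Finset.mem_powersetCard] using hDm
      exact Finset.erase_insert (fun h => (Finset.mem_erase.1 (hsub h)).1 rfl)
  have hsumbound : 2 * ∑ C₂ ∈ C₁.powersetCard m,
      (C₁.filter (fun α => α ∈ C₂ ∧ ¬ HappyA E G k t τ₁ C₁ α (C₂.erase α))).card
      ≤ cn.choose m * m := by
    have h1 : 2 * ∑ C₂ ∈ C₁.powersetCard m,
        (C₁.filter (fun α => α ∈ C₂ ∧ ¬ HappyA E G k t τ₁ C₁ α (C₂.erase α))).card
        ≤ cn * ((cn - 1).choose (m-1)) := by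
      rw [hswap, Finset.mul_sum]
      calc ∑ α ∈ C₁, 2 * (((C₁.erase α).powersetCard (m-1)).filter
            (fun D => ¬ HappyA E G k t τ₁ C₁ α D)).card
          ≤ ∑ _α ∈ C₁, (cn - 1).choose (m-1) :=
            Finset.sum_le_sum (fun α hα => stepA α hα)
      _ = cn * ((cn - 1).choose (m-1)) := by rw [Finset.sum_const, smul_eq_mul]
    have h2 : cn * ((cn - 1).choose (m-1)) = cn.choose m * m := by
      have h := Nat.add_one_mul_choose_eq (cn - 1) (m - 1)
      have e1 : (cn - 1) + 1 = cn := by omega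
      have e2 : (m - 1) + 1 = m := by omega
      rw [e1, e2] at h
      exact h
    omega
  have hex : ∃ C₂ ∈ C₁.powersetCard m,
      2 * (C₁.filter (fun α => α ∈ C₂ ∧ ¬ HappyA E G k t τ₁ C₁ α (C₂.erase α))).card ≤ m := by
    by_contra hcon
    push_neg at hcon
    have hlb : ∀ C₂ ∈ C₁.powersetCard m, m + 1 ≤
        2 * (C₁.filter (fun α => α ∈ C₂ ∧ ¬ HappyA E G k t τ₁ C₁ α (C₂.erase α))).card := by
      intro C₂ h
      have := hcon C₂ h
      omega
    have h1 : (C₁.powersetCard m).card * (m + 1) ≤ ∑ C₂ ∈ C₁.powersetCard m,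
        2 * (C₁.filter (fun α => α ∈ C₂ ∧ ¬ HappyA E G k t τ₁ C₁ α (C₂.erase α))).card := by
      calc (C₁.powersetCard m).card * (m + 1)
          = ∑ _C₂ ∈ C₁.powersetCard m, (m + 1) := by rw [Finset.sum_const, smul_eq_mul]
      _ ≤ _ := Finset.sum_le_sum hlb
    rw [Finset.card_powersetCard, ← Finset.mul_sum] at h1
    have hchpos : 0 < cn.choose m := Nat.choose_pos hmcn
    nlinarith [hsumbound, h1]
  obtain ⟨C₂0, hC₂0P, hcnt⟩ := hex
  obtain ⟨hC₂0sub, hC₂0card⟩ := Finset.mem_powersetCard.1 hC₂0P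
  set C₂ := C₂0.filter (fun α => HappyA E G k t τ₁ C₁ α (C₂0.erase α)) with hC₂def
  have hC₂sub0 : C₂ ⊆ C₂0 := Finset.filter_subset _ _
  have hC₂sub : C₂ ⊆ C₁ := hC₂sub0.trans hC₂0sub
  refine ⟨C₂, hC₂sub, ?_, ?_⟩
  · -- cardinality bound
    have heqf : C₂0.filter (fun α => ¬ HappyA E G k t τ₁ C₁ α (C₂0.erase α))
        = C₁.filter (fun α => α ∈ C₂0 ∧ ¬ HappyA E G k t τ₁ C₁ α (C₂0.erase α)) := by
      ext x
      simp only [Finset.mem_filter]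
      constructor
      · intro hx
        exact ⟨hC₂0sub hx.1, hx.1, hx.2⟩
      · intro hx
        exact ⟨hx.2.1, hx.2.2⟩
    have hsplit := Finset.card_filter_add_card_filter_not
      (s := C₂0) (p := fun α => HappyA E G k t τ₁ C₁ α (C₂0.erase α))
    rw [heqf] at hsplit
    have hm2card : m ≤ 2 * C₂.card := by
      have hC₂eq : C₂.card
          = (C₂0.filter (fun α => HappyA E G k t τ₁ C₁ α (C₂0.erase α))).card := by
        rw [hC₂def]
      rw [hC₂0card] at hsplit
      omega
    have h3 : cn < m * d := by
      have h1 := Nat.div_add_mod cn d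
      rw [hq, hdval] at h1
      have h2 : cn % d < d := Nat.mod_lt cn (by omega)
      rw [hdval] at h2
      rw [hmq, hdval]
      omega
    have hreal : (cn : ℝ) ≤ (2 * C₂.card) * d := by
      have : cn ≤ 2 * C₂.card * d :=
        le_trans h3.le (Nat.mul_le_mul_right d hm2card)
      exact_mod_cast this
    have hdpos : (0:ℝ) < 6 ^ 4 * (rho : ℝ) ^ 4 := by norm_num [rho]
    rw [div_le_iff₀ hdpos]
    have hdr : ((d : ℕ) : ℝ) = 648 * (rho : ℝ) ^ 4 := by
      rw [hd_def]
      push_cast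
      ring
    calc (cn : ℝ) ≤ (2 * C₂.card) * d := hreal
    _ = (C₂.card : ℝ) * (2 * ((d:ℕ):ℝ)) := by push_cast; ring
    _ = (C₂.card : ℝ) * (6 ^ 4 * (rho : ℝ) ^ 4) := by
        rw [hdr]; ring_nf
  · -- main property
    intro α hαC₂ s hs
    obtain ⟨hα0, hHap⟩ := Finset.mem_filter.1 hαC₂
    have hαC₁ : α ∈ C₁ := hC₂0sub hα0
    obtain ⟨hGP, hGM⟩ := hHap s hs
    have hWsub : Wof G (C₁.erase α) ⊆ Wof G (C₂.erase α) :=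
      Wof_antitone G (Finset.erase_subset_erase α hC₂sub)
    have hD'sub : C₂.erase α ⊆ C₂0.erase α := Finset.erase_subset_erase α hC₂sub0
    have hQokP : NokayP E G s ∩ Wof G (C₁.erase α) ⊆ Vokay G :=
      Finset.inter_subset_left.trans Finset.inter_subset_right
    have hQokM : NokayM E G s ∩ Wof G (C₁.erase α) ⊆ Vokay G :=
      Finset.inter_subset_left.trans Finset.inter_subset_right
    constructor
    · refine ⟨Surv E G k t (NokayP E G s ∩ Wof G (C₁.erase α)) (C₂0.erase α), ?_, hGP, ?_⟩
      · refine (Finset.filter_subset _ _).trans ?_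
        exact Finset.inter_subset_inter (Finset.Subset.refl _) hWsub
      · intro u hu
        exact surv_mem_bound E G k t τ₁ hG7 hG8 hQokP hD'sub hu
    · refine ⟨Surv E G k t (NokayM E G s ∩ Wof G (C₁.erase α)) (C₂0.erase α), ?_, hGM, ?_⟩
      · refine (Finset.filter_subset _ _).trans ?_
        exact Finset.inter_subset_inter (Finset.Subset.refl _) hWsub
      · intro u hu
        exact surv_mem_bound E G k t τ₁ hG7 hG8 hQokM hD'sub hu

end TournamentPartition
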